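/- (Fefferman–Stein type dual inequality, quantitative.) Let $t\in(1,\infty)$, $p\in(1,\infty)$, and $w$ a weight on $\mathbb{R}^d$. Then $\|Mf\|_{L^{p'}((M_t w)^{1-p'})} \le c_d\, p\, (t')^{1/p'} \|f\|_{L^{p'}(w^{1-p'})}$, where $M_t w = (M(w^t))^{1/t}$, $p'=p/(p-1)$, $t'=t/(t-1)$, and $M$ is the Hardy–Littlewood maximal operator. -/

import Mathlib

open MeasureTheory ENNReal Filter Set

noncomputable section

namespace Rough

abbrev Ed (d : ℕ) := EuclideanSpace ℝ (Fin d)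

structure Cube (d : ℕ) where
  center : Ed d
  halfside : ℝ
  halfside_pos : 0 < halfside

variable {d : ℕ}

def Cube.carrier (Q : Cube d) : Set (Ed d) :=
  {x | ∀ i, |x i - Q.center i| ≤ Q.halfside}

def Cube.dilate (Q : Cube d) (t : ℝ) (ht : 0 < t) : Cube d :=
  ⟨Q.center, t * Q.halfside, mul_pos ht Q.halfside_pos⟩

/-- Average of an `ℝ≥0∞`-valued function over a cube. -/
def lavg (Q : Cube d) (f : Ed d → ℝ≥0∞) : ℝ≥0∞ :=
  (volume Q.carrier)⁻¹ * ∫⁻ x in Q.carrier, f x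

/-- Hardy–Littlewood maximal operator over cubes, `ℝ≥0∞`-valued. -/
def maximal (f : Ed d → ℝ≥0∞) (x : Ed d) : ℝ≥0∞ :=
  ⨆ (Q : Cube d) (_ : x ∈ Q.carrier), lavg Q f

def Mabs (f : Ed d → ℝ) (x : Ed d) : ℝ≥0∞ :=
  maximal (fun y => ENNReal.ofReal |f y|) x

/-- `A₁` constant. -/
def A1Const (w : Ed d → ℝ) : ℝ≥0∞ :=
  ⨆ x : Ed d, Mabs w x / ENNReal.ofReal (w x)

/-- Fujii–Wilson `A∞` constant. -/
def AinfConst (w : Ed d → ℝ) : ℝ≥0∞ :=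
  ⨆ Q : Cube d,
    (∫⁻ x in Q.carrier, ENNReal.ofReal (w x))⁻¹ *
      ∫⁻ x in Q.carrier,
        maximal (Q.carrier.indicator fun y => ENNReal.ofReal (w y)) x

/-- Muckenhoupt `A_p` constant. -/
def ApConst (p : ℝ) (w : Ed d → ℝ) : ℝ≥0∞ :=
  ⨆ Q : Cube d,
    lavg Q (fun x => ENNReal.ofReal (w x)) *
      (lavg Q fun x => ENNReal.ofReal (w x ^ (-1 / (p - 1)))) ^ (p - 1)

/-- Localized Luxemburg norm `‖f‖_{L(log L)^β, Q}`. -/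
def luxNorm (β : ℝ) (Q : Cube d) (f : Ed d → ℝ) : ℝ :=
  sInf {t : ℝ | 0 < t ∧
    (∫⁻ x in Q.carrier,
      ENNReal.ofReal (|f x| / t * Real.log (Real.exp 1 + |f x| / t) ^ β))
      ≤ volume Q.carrier}

/-- Orlicz maximal operator `M_{L(log L)^β}`. -/
def MOrlicz (β : ℝ) (f : Ed d → ℝ) (x : Ed d) : ℝ≥0∞ :=
  ⨆ (Q : Cube d) (_ : x ∈ Q.carrier), ENNReal.ofReal (luxNorm β Q f)

def IsSparse (η : ℝ) (S : Set (Cube d)) : Prop :=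
  ∃ E : Cube d → Set (Ed d),
    (∀ Q ∈ S, MeasurableSet (E Q) ∧ E Q ⊆ Q.carrier ∧
      ENNReal.ofReal η * volume Q.carrier ≤ volume (E Q)) ∧
    S.Pairwise fun Q Q' => Disjoint (E Q) (E Q')

/-- Bilinear sparse form `𝓐_{S; L(log L)^β, L^r}(f, g)`. -/
def sparseForm (β r : ℝ) (S : Set (Cube d)) (f g : Ed d → ℝ) : ℝ≥0∞ :=
  ∑' Q : S, volume Q.1.carrier * ENNReal.ofReal (luxNorm β Q.1 f) *
    (lavg Q.1 fun x => ENNReal.ofReal (|g x| ^ r)) ^ (1 / r)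

def Sublinear (U : (Ed d → ℝ) → Ed d → ℝ) : Prop :=
  (∀ f g x, |U (f + g) x| ≤ |U f x| + |U g x|) ∧
    ∀ (c : ℝ) (f) (x), |U (c • f) x| = |c| * |U f x|

def LinearOp (U : (Ed d → ℝ) → Ed d → ℝ) : Prop :=
  (∀ f g, U (f + g) = U f + U g) ∧ ∀ (c : ℝ) (f), U (c • f) = c • U f

/-- `(L(log L)^β, L^r)`-bilinear sparse domination with bound `A`
(with `η`-sparse families). -/
def HasSparseDom (U : (Ed d → ℝ) → Ed d → ℝ) (β r η A : ℝ) : Prop :=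
  ∀ f : Ed d → ℝ, Measurable f → (∃ C, ∀ x, |f x| ≤ C) → HasCompactSupport f →
    ∃ S : Set (Cube d), IsSparse η S ∧
      ∀ g : Ed d → ℝ, Measurable g →
        ENNReal.ofReal |∫ x, g x * U f x| ≤ ENNReal.ofReal A * sparseForm β r S f g

def wMeasure (w : Ed d → ℝ) : Measure (Ed d) :=
  volume.withDensity fun x => ENNReal.ofReal (w x)

/-- Rough homogeneous singular integral, as a principal value. -/
def TOmega (Ω : Ed d → ℝ) (f : Ed d → ℝ) (x : Ed d) : ℝ :=
  limUnder (nhdsWithin (0:ℝ) (Set.Ioi 0)) fun ε =>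
    ∫ y in {y : Ed d | ε < dist x y}, Ω (x - y) / dist x y ^ d * f y

def HomZero (Ω : Ed d → ℝ) : Prop := ∀ t : ℝ, 0 < t → ∀ x, Ω (t • x) = Ω x

def MeanZero (Ω : Ed d → ℝ) : Prop :=
  ∫ x : Metric.sphere (0 : Ed d) 1, Ω x ∂(volume : Measure (Ed d)).toSphere = 0

/-- Grand maximal operator `𝓜_{T,r}`. -/
def grandM (T : (Ed d → ℝ) → Ed d → ℝ) (r : ℝ) (h : Ed d → ℝ) (x : Ed d) : ℝ≥0∞ :=
  ⨆ (Q : Cube d) (_ : x ∈ Q.carrier),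
    (lavg Q fun ξ =>
      ENNReal.ofReal |T (((Q.dilate 3 (by norm_num)).carrier)ᶜ.indicator h) ξ| ^ r) ^ (1 / r)

-- my lemmas
theorem Cube.volume_carrier (Q : Cube d) :
    volume Q.carrier = ENNReal.ofReal (2 * Q.halfside) ^ d := by
  have : Q.carrier = ((MeasurableEquiv.toLp 2 (Fin d → ℝ)).symm) ⁻¹'
      (Set.univ.pi fun i => Icc (Q.center i - Q.halfside) (Q.center i + Q.halfside)) := by
    ext x
    have key : ∀ i, ((MeasurableEquiv.toLp 2 (Fin d → ℝ)).symm) x i = x i := fun _ => rfl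
    simp only [Cube.carrier, Set.mem_preimage, Set.mem_pi, Set.mem_univ, forall_true_left,
      Set.mem_Icc, Set.mem_setOf_eq, key]
    constructor
    · intro h i; have := h i; rw [abs_sub_le_iff] at this; constructor <;> linarith [this.1, this.2]
    · intro h i; have := h i; rw [abs_sub_le_iff]; constructor <;> linarith [this.1, this.2]
  rw [this, (EuclideanSpace.volume_preserving_symm_measurableEquiv_toLp (Fin d)).measure_preimage
    ((MeasurableSet.univ_pi fun i => measurableSet_Icc).nullMeasurableSet)]
  rw [volume_pi_pi]
  simp only [Real.volume_Icc]
  have : ∀ i : Fin d, Q.center i + Q.halfside - (Q.center i - Q.halfside) = 2 * Q.halfside := by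
    intro i; ring
  simp [this, Finset.prod_const]
theorem Cube.volume_pos (Q : Cube d) : 0 < volume Q.carrier := by
  rw [Q.volume_carrier, pos_iff_ne_zero]
  exact pow_ne_zero _ (ENNReal.ofReal_pos.2 (by linarith [Q.halfside_pos])).ne'
theorem Cube.volume_ne_top (Q : Cube d) : volume Q.carrier ≠ ⊤ := by
  rw [Q.volume_carrier]; exact pow_ne_top ofReal_ne_top
theorem Cube.measurable_carrier (Q : Cube d) : MeasurableSet Q.carrier := by
  have : Q.carrier = ⋂ i, {x : Ed d | |x i - Q.center i| ≤ Q.halfside} := by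
    ext x; simp [Cube.carrier]
  rw [this]
  exact MeasurableSet.iInter fun i => by
    apply measurableSet_le (by fun_prop) measurable_const
theorem Cube.volume_dilate (Q : Cube d) {t : ℝ} (ht : 0 < t) :
    volume (Q.dilate t ht).carrier = ENNReal.ofReal t ^ d * volume Q.carrier := by
  rw [Cube.volume_carrier, Cube.volume_carrier]
  show ENNReal.ofReal (2 * (t * Q.halfside)) ^ d = _
  rw [show 2 * (t * Q.halfside) = t * (2 * Q.halfside) by ring,
    ENNReal.ofReal_mul ht.le, mul_pow]
theorem Cube.center_mem (Q : Cube d) : Q.center ∈ Q.carrier := by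
  intro i; simp [Q.halfside_pos.le]
theorem Cube.subset_dilate (Q : Cube d) {t : ℝ} (ht : 0 < t) (h1 : 1 ≤ t) :
    Q.carrier ⊆ (Q.dilate t ht).carrier := by
  intro x hx i
  calc |x i - Q.center i| ≤ Q.halfside := hx i
  _ ≤ t * Q.halfside := by nlinarith [Q.halfside_pos]
theorem abs_coord_le_dist (x y : Ed d) (i : Fin d) : |x i - y i| ≤ dist x y := by
  rw [EuclideanSpace.dist_eq]
  have h1 : |x i - y i| = Real.sqrt (dist (x i) (y i) ^ 2) := by
    rw [Real.sqrt_sq dist_nonneg, Real.dist_eq]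
  rw [h1]
  apply Real.sqrt_le_sqrt
  exact Finset.single_le_sum (f := fun j => dist (x j) (y j) ^ 2)
    (fun j _ => sq_nonneg _) (Finset.mem_univ i)

theorem le_maximal {f : Ed d → ℝ≥0∞} {x : Ed d} {Q : Cube d} (hx : x ∈ Q.carrier) :
    lavg Q f ≤ maximal f x :=
  le_iSup₂ (f := fun (Q : Cube d) (_ : x ∈ Q.carrier) => lavg Q f) Q hx

theorem maximal_mono {f g : Ed d → ℝ≥0∞} (h : ∀ y, f y ≤ g y) (x : Ed d) :
    maximal f x ≤ maximal g x := by
  refine iSup₂_le fun Q hQ => le_trans ?_ (le_maximal hQ)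
  exact mul_le_mul_right (lintegral_mono fun y => h y) _

theorem maximal_congr_ae {f g : Ed d → ℝ≥0∞} (h : f =ᵐ[volume] g) :
    maximal f = maximal g := by
  have : ∀ Q : Cube d, lavg Q f = lavg Q g := fun Q => by
    rw [lavg, lavg, lintegral_congr_ae (ae_restrict_of_ae h)]
  funext x; simp only [maximal, this]

theorem exists_ball_of_lt_maximal {h : Ed d → ℝ≥0∞} {x : Ed d} {l : ℝ≥0∞}
    (hl : l < maximal h x) :
    ∃ (Q : Cube d) (ε : ℝ), 0 < ε ∧ Metric.ball x ε ⊆ Q.carrier ∧ l < lavg Q h := by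
  rw [maximal, lt_iSup_iff] at hl
  obtain ⟨Q, hl⟩ := hl
  rw [lt_iSup_iff] at hl
  obtain ⟨hxQ, hl⟩ := hl
  obtain ⟨r, hlr, hrL⟩ := exists_between hl
  obtain ⟨r', hlr', hr'r⟩ := exists_between hlr
  have hrtop : r ≠ ⊤ := hrL.ne_top
  have hr'top : r' ≠ ⊤ := hr'r.ne_top
  have hr'pos : 0 < r' := lt_of_le_of_lt (zero_le (a := l)) hlr'
  set a := r'.toReal with ha
  set b := r.toReal with hb
  have hapos : 0 < a := ENNReal.toReal_pos hr'pos.ne' hr'top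
  have hab : a < b := ENNReal.toReal_lt_toReal hr'top hrtop |>.2 hr'r
  have hbpos : 0 < b := hapos.trans hab
  have hba1 : 1 < b / a := (one_lt_div hapos).2 hab
  set ρ : ℝ := (b / a) ^ ((d : ℝ) + 1)⁻¹ with hρ
  have hρ1 : 1 < ρ := by
    rw [hρ, Real.one_lt_rpow_iff_of_pos (by positivity)]
    exact Or.inl ⟨hba1, by positivity⟩
  have hρpos : (0:ℝ) < ρ := lt_trans one_pos hρ1
  have hρd : ρ ^ d ≤ b / a := by
    rw [hρ, ← Real.rpow_natCast ((b/a) ^ ((d:ℝ)+1)⁻¹) d, ← Real.rpow_mul (by positivity)]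
    calc (b/a) ^ (((d:ℝ)+1)⁻¹ * d) ≤ (b/a) ^ (1:ℝ) := by
          apply Real.rpow_le_rpow_of_exponent_le hba1.le
          rw [inv_mul_le_iff₀ (by positivity)]
          push_cast; linarith
    _ = b / a := Real.rpow_one _
  refine ⟨Q.dilate ρ hρpos, (ρ - 1) * Q.halfside,
    mul_pos (by linarith) Q.halfside_pos, ?_, ?_⟩
  · intro y hy i
    have h1 : |y i - x i| ≤ dist y x := abs_coord_le_dist y x i
    have h2 : dist y x < (ρ - 1) * Q.halfside := Metric.mem_ball.1 hy
    have h3 : |x i - Q.center i| ≤ Q.halfside := hxQ i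
    show |y i - Q.center i| ≤ ρ * Q.halfside
    calc |y i - Q.center i| ≤ |y i - x i| + |x i - Q.center i| := abs_sub_le _ _ _
    _ ≤ (ρ - 1) * Q.halfside + Q.halfside := by linarith
    _ = ρ * Q.halfside := by ring
  · have key : (ENNReal.ofReal ρ ^ d)⁻¹ * lavg Q h ≤ lavg (Q.dilate ρ hρpos) h := by
      rw [lavg, lavg, Q.volume_dilate hρpos,
        ENNReal.mul_inv (Or.inl (pow_ne_zero _ ((ENNReal.ofReal_pos.2 hρpos).ne')))
          (Or.inl (pow_ne_top ofReal_ne_top)), mul_assoc]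
      exact mul_le_mul_right (mul_le_mul_right
        (lintegral_mono_set (Q.subset_dilate hρpos hρ1.le)) _) _
    refine lt_of_lt_of_le ?_ key
    have e1 : (ENNReal.ofReal ρ ^ d)⁻¹ = (ENNReal.ofReal (ρ ^ d))⁻¹ := by
      rw [ENNReal.ofReal_pow hρpos.le]
    have e2 : (ENNReal.ofReal (b/a))⁻¹ ≤ (ENNReal.ofReal (ρ ^ d))⁻¹ :=
      ENNReal.inv_le_inv.2 (ENNReal.ofReal_le_ofReal hρd)
    have e3 : l < (ENNReal.ofReal (b/a))⁻¹ * r := by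
      have : (ENNReal.ofReal (b/a))⁻¹ = ENNReal.ofReal (a/b) := by
        rw [← ENNReal.ofReal_inv_of_pos (by positivity)]
        congr 1
        field_simp
      rw [this, show r = ENNReal.ofReal b from (ENNReal.ofReal_toReal hrtop).symm,
        ← ENNReal.ofReal_mul (by positivity)]
      rw [show a / b * b = a by field_simp]
      calc l < r' := hlr'
      _ = ENNReal.ofReal a := (ENNReal.ofReal_toReal hr'top).symm
    calc l < (ENNReal.ofReal (b/a))⁻¹ * r := e3
    _ ≤ (ENNReal.ofReal ρ ^ d)⁻¹ * lavg Q h := by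
        rw [e1]; exact mul_le_mul' e2 hrL.le

theorem isOpen_maximal_gt (h : Ed d → ℝ≥0∞) (l : ℝ≥0∞) :
    IsOpen {x : Ed d | l < maximal h x} := by
  rw [Metric.isOpen_iff]
  intro x hx
  obtain ⟨Q, ε, hε, hball, hl⟩ := exists_ball_of_lt_maximal hx
  exact ⟨ε, hε, fun y hy => lt_of_lt_of_le hl (le_maximal (hball hy))⟩

theorem measurable_maximal (h : Ed d → ℝ≥0∞) : Measurable (maximal h) := by
  apply measurable_of_Ioi
  intro l
  exact (isOpen_maximal_gt h l).measurableSet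


theorem Cube.subset_dilate3 {Q Q' : Cube d} (hint : ¬ Disjoint Q.carrier Q'.carrier)
    (hle : Q.halfside ≤ Q'.halfside) :
    Q.carrier ⊆ (Q'.dilate 3 (by norm_num)).carrier := by
  obtain ⟨z, hzQ, hzQ'⟩ := Set.not_disjoint_iff.1 hint
  intro y hy i
  show |y i - Q'.center i| ≤ 3 * Q'.halfside
  calc |y i - Q'.center i| ≤ |y i - Q.center i| + |Q.center i - z i| + |z i - Q'.center i| := by
        have := abs_sub_le (y i) (Q.center i) (Q'.center i)
        have := abs_sub_le (Q.center i) (z i) (Q'.center i)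
        linarith [abs_sub_le (y i) (Q.center i) (Q'.center i),
          abs_sub_le (Q.center i) (z i) (Q'.center i)]
  _ ≤ Q.halfside + Q.halfside + Q'.halfside := by
        have h1 := hy i
        have h2 := hzQ i
        have h3 := hzQ' i
        rw [abs_sub_comm] at h2
        linarith
  _ ≤ 3 * Q'.halfside := by linarith

theorem vitali_finset : ∀ (S : Finset (Cube d)), ∃ T : Finset (Cube d), T ⊆ S ∧
    ((T : Set (Cube d)).PairwiseDisjoint fun Q => Q.carrier) ∧
    ∀ Q ∈ S, ∃ Q' ∈ T, Q.carrier ⊆ (Q'.dilate 3 (by norm_num)).carrier := by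
  classical
  suffices H : ∀ (n : ℕ) (S : Finset (Cube d)), S.card ≤ n → ∃ T : Finset (Cube d), T ⊆ S ∧
      ((T : Set (Cube d)).PairwiseDisjoint fun Q => Q.carrier) ∧
      ∀ Q ∈ S, ∃ Q' ∈ T, Q.carrier ⊆ (Q'.dilate 3 (by norm_num)).carrier by
    exact fun S => H S.card S le_rfl
  intro n
  induction n with
  | zero =>
      intro S hS
      rw [Nat.le_zero, Finset.card_eq_zero] at hS
      subst hS
      exact ⟨∅, Finset.Subset.refl _, by simp, by simp⟩
  | succ n ih =>
      intro S hS
      rcases S.eq_empty_or_nonempty with rfl | hne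
      · exact ⟨∅, Finset.Subset.refl _, by simp, by simp⟩
      obtain ⟨Q₀, hQ₀S, hQ₀max⟩ := S.exists_max_image (fun Q => Q.halfside) hne
      set S' := S.filter (fun Q => Disjoint Q.carrier Q₀.carrier) with hS'
      have hQ₀S' : Q₀ ∉ S' := by
        simp only [hS', Finset.mem_filter, not_and]
        intro _
        rw [Set.not_disjoint_iff]
        exact ⟨Q₀.center, Q₀.center_mem, Q₀.center_mem⟩
      have hcard : S'.card ≤ n := by
        have h1 : S'.card < S.card := Finset.card_lt_card ⟨Finset.filter_subset _ _,
          fun hsub => hQ₀S' (hsub hQ₀S)⟩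
        omega
      obtain ⟨T', hT'S', hT'disj, hT'cover⟩ := ih S' hcard
      refine ⟨insert Q₀ T', ?_, ?_, ?_⟩
      · intro Q hQ
        rcases Finset.mem_insert.1 hQ with rfl | hQ
        · exact hQ₀S
        · exact Finset.filter_subset _ _ (hT'S' hQ)
      · rw [Finset.coe_insert]
        apply Set.PairwiseDisjoint.insert
        · exact hT'disj
        · intro Q hQ _
          have : Q ∈ S' := hT'S' hQ
          exact ((Finset.mem_filter.1 this).2).symm
      · intro Q hQS
        by_cases hd : Disjoint Q.carrier Q₀.carrier
        · have : Q ∈ S' := Finset.mem_filter.2 ⟨hQS, hd⟩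
          obtain ⟨Q', hQ'T', hsub⟩ := hT'cover Q this
          exact ⟨Q', Finset.mem_insert_of_mem hQ'T', hsub⟩
        · exact ⟨Q₀, Finset.mem_insert_self _ _,
            Cube.subset_dilate3 hd (hQ₀max Q hQS)⟩

theorem weak_type (h : Ed d → ℝ≥0∞) (l : ℝ≥0∞) :
    l * volume {x : Ed d | l < maximal h x} ≤ 3^d * ∫⁻ x, h x := by
  classical
  set O := {x : Ed d | l < maximal h x} with hO
  rw [(isOpen_maximal_gt h l).measure_eq_iSup_isCompact]
  rw [ENNReal.mul_iSup]
  refine iSup_le fun K => ?_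
  rw [ENNReal.mul_iSup]
  refine iSup_le fun hKO => ?_
  rw [ENNReal.mul_iSup]
  refine iSup_le fun hK => ?_
  have hchoice : ∀ i : {y : Ed d // y ∈ O}, ∃ (Q : Cube d) (ε : ℝ),
      0 < ε ∧ Metric.ball i.1 ε ⊆ Q.carrier ∧ l < lavg Q h :=
    fun i => exists_ball_of_lt_maximal i.2
  choose Qc εc hε hball hlavg using hchoice
  have hcover : K ⊆ ⋃ i : {y : Ed d // y ∈ O}, Metric.ball i.1 (εc i) :=
    fun y hy => Set.mem_iUnion.2 ⟨⟨y, hKO hy⟩, Metric.mem_ball_self (hε _)⟩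
  obtain ⟨F, hF⟩ := hK.elim_finite_subcover _ (fun i => Metric.isOpen_ball) hcover
  set S := F.image Qc with hSdef
  obtain ⟨T, hTS, hTdisj, hTcover⟩ := vitali_finset S
  have hQavg : ∀ Q ∈ S, l < lavg Q h := by
    intro Q hQ
    obtain ⟨i, _, rfl⟩ := Finset.mem_image.1 hQ
    exact hlavg i
  have hKsub : K ⊆ ⋃ Q' ∈ T, (Q'.dilate 3 (by norm_num)).carrier := by
    intro y hy
    obtain ⟨i, hiF, hyi⟩ := Set.mem_iUnion₂.1 (hF hy)
    have h1 : y ∈ (Qc i).carrier := hball i hyi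
    obtain ⟨Q', hQ'T, hsub⟩ := hTcover (Qc i) (Finset.mem_image_of_mem Qc hiF)
    exact Set.mem_iUnion₂.2 ⟨Q', hQ'T, hsub h1⟩
  calc l * volume K
      ≤ l * volume (⋃ Q' ∈ T, (Q'.dilate 3 (by norm_num)).carrier) :=
        mul_le_mul_right (measure_mono hKsub) _
  _ ≤ l * ∑ Q' ∈ T, volume ((Q'.dilate 3 (by norm_num)).carrier) :=
        mul_le_mul_right (measure_biUnion_finset_le _ _) _
  _ = ∑ Q' ∈ T, l * volume ((Q'.dilate 3 (by norm_num)).carrier) := Finset.mul_sum _ _ _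
  _ = ∑ Q' ∈ T, 3^d * (l * volume Q'.carrier) := by
        refine Finset.sum_congr rfl fun Q' _ => ?_
        rw [Q'.volume_dilate (by norm_num)]
        rw [show ENNReal.ofReal 3 = (3 : ℝ≥0∞) by simp]
        ring
  _ ≤ ∑ Q' ∈ T, 3^d * ∫⁻ x in Q'.carrier, h x := by
        refine Finset.sum_le_sum fun Q' hQ' => mul_le_mul_right ?_ _
        have h1 := (hQavg Q' (hTS hQ')).le
        rw [lavg] at h1
        calc l * volume Q'.carrier
            ≤ (volume Q'.carrier)⁻¹ * (∫⁻ x in Q'.carrier, h x) * volume Q'.carrier :=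
              mul_le_mul_left h1 _
        _ = ∫⁻ x in Q'.carrier, h x := by
              rw [mul_comm ((volume Q'.carrier)⁻¹), mul_assoc,
                ENNReal.inv_mul_cancel Q'.volume_pos.ne' Q'.volume_ne_top, mul_one]
  _ = 3^d * ∑ Q' ∈ T, ∫⁻ x in Q'.carrier, h x := (Finset.mul_sum _ _ _).symm
  _ ≤ 3^d * ∫⁻ x, h x := by
        refine mul_le_mul_right ?_ _
        rw [← lintegral_biUnion_finset hTdisj (fun Q' _ => Q'.measurable_carrier) h]
        exact setLIntegral_le_lintegral _ _


theorem lintegral_Ioo_rpow {e R : ℝ} (he : -1 < e) (hR : 0 < R) :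
    ∫⁻ t in Ioo (0:ℝ) R, ENNReal.ofReal (t ^ e) = ENNReal.ofReal (R ^ (e+1) / (e+1)) := by
  have hInt : IntegrableOn (fun t : ℝ => t ^ e) (Ioo 0 R) volume := by
    have h1 : IntervalIntegrable (fun t : ℝ => t ^ e) volume 0 R :=
      intervalIntegral.intervalIntegrable_rpow' he
    rw [intervalIntegrable_iff_integrableOn_Ioo_of_le hR.le] at h1
    exact h1
  rw [← ofReal_integral_eq_lintegral_ofReal hInt]
  · congr 1
    rw [← integral_Ioc_eq_integral_Ioo, ← intervalIntegral.integral_of_le hR.le,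
      integral_rpow (Or.inl he)]
    rw [Real.zero_rpow (by linarith : e + 1 ≠ 0)]
    ring
  · filter_upwards [ae_restrict_mem measurableSet_Ioo] with t ht
    exact Real.rpow_nonneg ht.1.le e

theorem lintegral_Ioi_rpow_top {e c : ℝ} (he : 0 ≤ e) (hc : 0 < c) :
    ∫⁻ t in Ioi (0:ℝ), ENNReal.ofReal (c * t ^ e) = ∞ := by
  refine top_unique ?_
  calc (⊤:ℝ≥0∞) = ∫⁻ _ in Ioi (1:ℝ), ENNReal.ofReal c := by
        rw [setLIntegral_const, Real.volume_Ioi,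
          ENNReal.mul_top (ENNReal.ofReal_pos.2 hc).ne']
  _ ≤ ∫⁻ t in Ioi (1:ℝ), ENNReal.ofReal (c * t ^ e) := by
        refine setLIntegral_mono_ae (by fun_prop) ?_
        filter_upwards with t ht
        apply ENNReal.ofReal_le_ofReal
        nlinarith [Real.one_le_rpow ht.le he]
  _ ≤ ∫⁻ t in Ioi (0:ℝ), ENNReal.ofReal (c * t ^ e) :=
        lintegral_mono_set (fun t (ht : 1 < t) => lt_trans one_pos ht)

theorem maximal_split (h : Ed d → ℝ≥0∞) (a : ℝ≥0∞) (x : Ed d) :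
    maximal h x ≤ maximal (fun y => if a < h y then h y else 0) x + a := by
  refine iSup₂_le fun Q hQ => ?_
  have h1 : lavg Q h ≤ lavg Q (fun y => (if a < h y then h y else 0) + a) := by
    refine mul_le_mul_right (lintegral_mono fun y => ?_) _
    by_cases hy : a < h y
    · simp [hy]
    · simp only [hy, if_false, zero_add]
      exact le_of_not_gt hy
  have h2 : lavg Q (fun y => (if a < h y then h y else 0) + a)
      = lavg Q (fun y => if a < h y then h y else 0) + a := by
    rw [lavg, lavg, lintegral_add_right _ measurable_const, setLIntegral_const, mul_add]
    congr 1
    rw [← mul_assoc, mul_comm ((volume Q.carrier)⁻¹), mul_assoc,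
      ENNReal.inv_mul_cancel Q.volume_pos.ne' Q.volume_ne_top, mul_one]
  calc lavg Q h ≤ _ := h1
  _ = _ := h2
  _ ≤ maximal (fun y => if a < h y then h y else 0) x + a :=
      add_le_add_left (le_maximal hQ) a

theorem lintegral_maximal_rpow (h : Ed d → ℝ≥0∞) (hmeas : Measurable h) {q : ℝ} (hq : 1 < q) :
    ∫⁻ x, (maximal h x) ^ q ≤
      ENNReal.ofReal ((3:ℝ)^d * 2^q * (q/(q-1))) * ∫⁻ x, (h x) ^ q := by
  set g := maximal h with hg
  have hgmeas : Measurable g := measurable_maximal h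
  have hq0 : (0:ℝ) < q := by linarith
  -- Step 1 : pointwise layercake lower bound
  have claim1 : ∀ x, g x ^ q ≤ ∫⁻ t in Ioi (0:ℝ),
      (if ENNReal.ofReal t < g x then ENNReal.ofReal (q * t ^ (q-1)) else 0) := by
    intro x
    rcases eq_or_ne (g x) 0 with h0 | h0
    · rw [h0, ENNReal.zero_rpow_of_pos hq0]
      exact zero_le
    rcases eq_or_ne (g x) ⊤ with htop | htop
    · rw [htop]
      have : ∀ t : ℝ, (if ENNReal.ofReal t < (⊤:ℝ≥0∞) then ENNReal.ofReal (q * t ^ (q-1)) else 0)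
          = ENNReal.ofReal (q * t ^ (q-1)) := fun t => if_pos ofReal_lt_top
      simp only [this]
      rw [lintegral_Ioi_rpow_top (by linarith) hq0]
      exact le_top
    · set R := (g x).toReal with hR
      have hRpos : 0 < R := ENNReal.toReal_pos h0 htop
      have key : ∫⁻ t in Ioo (0:ℝ) R,
          (if ENNReal.ofReal t < g x then ENNReal.ofReal (q * t ^ (q-1)) else 0)
          = ENNReal.ofReal (R ^ q) := by
        rw [setLIntegral_congr_fun measurableSet_Ioo
          (fun t (ht : t ∈ Ioo 0 R) => if_pos
            ((ENNReal.ofReal_lt_iff_lt_toReal ht.1.le htop).2 ht.2))]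
        have : ∀ t : ℝ, ENNReal.ofReal (q * t ^ (q-1))
            = ENNReal.ofReal q * ENNReal.ofReal (t ^ (q-1)) := fun t =>
          ENNReal.ofReal_mul hq0.le
        simp only [this]
        rw [lintegral_const_mul' _ _ ofReal_ne_top, lintegral_Ioo_rpow (by linarith) hRpos]
        rw [← ENNReal.ofReal_mul hq0.le]
        congr 1
        have : q - 1 + 1 = q := by ring
        rw [this]
        field_simp
      calc g x ^ q = ENNReal.ofReal (R ^ q) := by
            rw [← ENNReal.ofReal_rpow_of_nonneg hRpos.le hq0.le, ENNReal.ofReal_toReal htop]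
      _ = _ := key.symm
      _ ≤ _ := lintegral_mono_set (Ioo_subset_Ioi_self)
  -- Step 2 : swap
  have swap1 : ∫⁻ x, (∫⁻ t in Ioi (0:ℝ),
      (if ENNReal.ofReal t < g x then ENNReal.ofReal (q * t ^ (q-1)) else 0)) =
      ∫⁻ t in Ioi (0:ℝ), (∫⁻ x,
      (if ENNReal.ofReal t < g x then ENNReal.ofReal (q * t ^ (q-1)) else 0)) := by
    apply lintegral_lintegral_swap
    apply Measurable.aemeasurable
    apply Measurable.ite
    · exact measurableSet_lt (by fun_prop) (hgmeas.comp measurable_fst)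
    · fun_prop
    · fun_prop
  -- weak type consequence, for fixed t > 0
  have step_t : ∀ t : ℝ, 0 < t →
      (∫⁻ x, (if ENNReal.ofReal t < g x then ENNReal.ofReal (q * t ^ (q-1)) else 0)) ≤
      (3:ℝ≥0∞)^d * ∫⁻ x, (if ENNReal.ofReal (t/2) < h x
        then ENNReal.ofReal (2*q*t^(q-2)) * h x else 0) := by
    intro t ht
    have ht2 : (0:ℝ) < t/2 := by linarith
    set h1t := fun y => if ENNReal.ofReal (t/2) < h y then h y else 0 with hh1t
    have e1 : (∫⁻ x, (if ENNReal.ofReal t < g x then ENNReal.ofReal (q * t ^ (q-1)) else 0)) =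
        ENNReal.ofReal (q * t ^ (q-1)) * volume {x : Ed d | ENNReal.ofReal t < g x} := by
      rw [← lintegral_indicator_const
        (measurableSet_lt measurable_const hgmeas : MeasurableSet {x : Ed d | ENNReal.ofReal t < g x})]
      congr 1 with x
      rw [Set.indicator_apply]
      rfl
    rw [e1]
    have subset1 : {x : Ed d | ENNReal.ofReal t < g x} ⊆
        {x : Ed d | ENNReal.ofReal (t/2) < maximal h1t x} := by
      intro x hx
      by_contra hcon
      simp only [Set.mem_setOf_eq, not_lt] at hcon
      have := maximal_split h (ENNReal.ofReal (t/2)) x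
      rw [← hg] at this
      have h3 : g x ≤ ENNReal.ofReal (t/2) + ENNReal.ofReal (t/2) :=
        le_trans this (add_le_add_left hcon _)
      rw [← ENNReal.ofReal_add ht2.le ht2.le] at h3
      rw [show t/2 + t/2 = t by ring] at h3
      exact absurd (lt_of_lt_of_le hx h3) (lt_irrefl _)
    have weak := weak_type h1t (ENNReal.ofReal (t/2))
    have vol_bound : volume {x : Ed d | ENNReal.ofReal t < g x} ≤
        (ENNReal.ofReal (t/2))⁻¹ * ((3:ℝ≥0∞)^d * ∫⁻ x, h1t x) := by
      have h4 : volume {x : Ed d | ENNReal.ofReal t < g x} ≤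
          volume {x : Ed d | ENNReal.ofReal (t/2) < maximal h1t x} := measure_mono subset1
      have h5 := le_trans (mul_le_mul_right h4 (ENNReal.ofReal (t/2))) weak
      calc volume {x : Ed d | ENNReal.ofReal t < g x}
          = (ENNReal.ofReal (t/2))⁻¹ * (ENNReal.ofReal (t/2) *
            volume {x : Ed d | ENNReal.ofReal t < g x}) := by
            rw [← mul_assoc, ENNReal.inv_mul_cancel (ENNReal.ofReal_pos.2 ht2).ne'
              ofReal_ne_top, one_mul]
      _ ≤ _ := mul_le_mul_right h5 _
    calc ENNReal.ofReal (q * t ^ (q-1)) * volume {x : Ed d | ENNReal.ofReal t < g x}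
        ≤ ENNReal.ofReal (q * t ^ (q-1)) *
          ((ENNReal.ofReal (t/2))⁻¹ * ((3:ℝ≥0∞)^d * ∫⁻ x, h1t x)) :=
          mul_le_mul_right vol_bound _
    _ = (3:ℝ≥0∞)^d * (ENNReal.ofReal (2*q*t^(q-2)) * ∫⁻ x, h1t x) := by
          have hcoef : ENNReal.ofReal (q * t ^ (q-1)) * (ENNReal.ofReal (t/2))⁻¹ =
              ENNReal.ofReal (2*q*t^(q-2)) := by
            rw [← ENNReal.ofReal_inv_of_pos ht2, ← ENNReal.ofReal_mul (by positivity)]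
            congr 1
            rw [inv_div]
            have htq : t ^ (q-2) = t ^ (q-1) / t := by
              rw [show q - 2 = q - 1 - 1 by ring, Real.rpow_sub ht, Real.rpow_one]
            rw [htq]
            field_simp
          rw [← mul_assoc, hcoef]
          ring
    _ = (3:ℝ≥0∞)^d * ∫⁻ x, (if ENNReal.ofReal (t/2) < h x
          then ENNReal.ofReal (2*q*t^(q-2)) * h x else 0) := by
          congr 1
          rw [← lintegral_const_mul' _ _ ofReal_ne_top]
          congr 1 with x
          by_cases hx : ENNReal.ofReal (t/2) < h x
          · simp [hh1t, hx]
          · simp [hh1t, hx]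
  -- Step 5: inner t-integral bound for fixed x
  have step_x : ∀ x : Ed d, (∫⁻ t in Ioi (0:ℝ), (if ENNReal.ofReal (t/2) < h x
        then ENNReal.ofReal (2*q*t^(q-2)) * h x else 0)) ≤
      ENNReal.ofReal (2^q * (q/(q-1))) * h x ^ q := by
    intro x
    rcases eq_or_ne (h x) ⊤ with htop | htop
    · rw [htop, ENNReal.top_rpow_of_pos hq0, ENNReal.mul_top]
      · exact le_top
      · have hq1 : (0:ℝ) < q - 1 := by linarith
        exact (ENNReal.ofReal_pos.2 (by positivity)).ne'
    rcases eq_or_ne (h x) 0 with h0 | h0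
    · have : ∀ t : ℝ, (if ENNReal.ofReal (t/2) < h x
          then ENNReal.ofReal (2*q*t^(q-2)) * h x else 0) = 0 := by
        intro t
        rw [h0]
        simp
      simp only [this, lintegral_zero]
      exact zero_le
    · set R := (h x).toReal with hRdef
      have hRpos : 0 < R := ENNReal.toReal_pos h0 htop
      have seteq : {t : ℝ | ENNReal.ofReal (t/2) < h x} ∩ Ioi (0:ℝ) = Ioo 0 (2*R) := by
        ext t
        simp only [Set.mem_inter_iff, Set.mem_setOf_eq, Set.mem_Ioi, Set.mem_Ioo]
        constructor
        · rintro ⟨hlt, ht0⟩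
          refine ⟨ht0, ?_⟩
          have := (ENNReal.ofReal_lt_iff_lt_toReal (by linarith) htop).1 hlt
          linarith
        · rintro ⟨ht0, htR⟩
          exact ⟨(ENNReal.ofReal_lt_iff_lt_toReal (by linarith) htop).2 (by linarith), ht0⟩
      have e2 : (∫⁻ t in Ioi (0:ℝ), (if ENNReal.ofReal (t/2) < h x
          then ENNReal.ofReal (2*q*t^(q-2)) * h x else 0)) =
          ∫⁻ t in Ioo (0:ℝ) (2*R), ENNReal.ofReal (2*q*t^(q-2)) * h x := by
        have hmble : MeasurableSet {t : ℝ | ENNReal.ofReal (t/2) < h x} :=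
          measurableSet_lt (by fun_prop) measurable_const
        rw [show (fun t : ℝ => (if ENNReal.ofReal (t/2) < h x
            then ENNReal.ofReal (2*q*t^(q-2)) * h x else 0)) =
            Set.indicator {t : ℝ | ENNReal.ofReal (t/2) < h x}
              (fun t => ENNReal.ofReal (2*q*t^(q-2)) * h x) from ?_]
        · rw [lintegral_indicator hmble, Measure.restrict_restrict hmble, seteq]
        · funext t
          rw [Set.indicator_apply]
          rfl
      rw [e2]
      have e3 : (∫⁻ t in Ioo (0:ℝ) (2*R), ENNReal.ofReal (2*q*t^(q-2)) * h x) =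
          (∫⁻ t in Ioo (0:ℝ) (2*R), ENNReal.ofReal (2*q*t^(q-2))) * h x :=
        lintegral_mul_const' _ _ htop
      rw [e3]
      have e4 : (∫⁻ t in Ioo (0:ℝ) (2*R), ENNReal.ofReal (2*q*t^(q-2))) =
          ENNReal.ofReal (2*q) * ENNReal.ofReal ((2*R) ^ (q-1) / (q-1)) := by
        have : ∀ t : ℝ, ENNReal.ofReal (2*q*t^(q-2)) =
            ENNReal.ofReal (2*q) * ENNReal.ofReal (t^(q-2)) := fun t => by
          rw [← ENNReal.ofReal_mul (by positivity), mul_assoc]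
        simp only [this]
        rw [lintegral_const_mul' _ _ ofReal_ne_top,
          lintegral_Ioo_rpow (by linarith) (by linarith)]
        rw [show q - 2 + 1 = q - 1 by ring]
      rw [e4]
      have hq1 : (0:ℝ) < q - 1 := by linarith
      have e5 : ENNReal.ofReal (2*q) * ENNReal.ofReal ((2*R) ^ (q-1) / (q-1)) =
          ENNReal.ofReal (2^q * (q/(q-1))) * ENNReal.ofReal (R ^ (q-1)) := by
        rw [← ENNReal.ofReal_mul (by positivity), ← ENNReal.ofReal_mul (by positivity)]
        congr 1
        rw [Real.mul_rpow (by norm_num) hRpos.le,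
          Real.rpow_sub (by norm_num : (0:ℝ) < 2) q 1, Real.rpow_one]
        field_simp
      rw [e5, mul_assoc]
      refine mul_le_mul_right ?_ _
      have e6 : ENNReal.ofReal (R ^ (q-1)) = h x ^ (q-1) := by
        rw [← ENNReal.ofReal_rpow_of_nonneg hRpos.le (by linarith), ENNReal.ofReal_toReal htop]
      have e7 : h x ^ (q-1) * h x = h x ^ q := by
        nth_rewrite 2 [← ENNReal.rpow_one (h x)]
        rw [← ENNReal.rpow_add _ _ h0 htop]
        norm_num
      rw [e6, e7]
  -- Step 6: assemble
  calc ∫⁻ x, g x ^ q ≤ ∫⁻ x, (∫⁻ t in Ioi (0:ℝ),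
        (if ENNReal.ofReal t < g x then ENNReal.ofReal (q * t ^ (q-1)) else 0)) :=
        lintegral_mono claim1
  _ = ∫⁻ t in Ioi (0:ℝ), (∫⁻ x,
        (if ENNReal.ofReal t < g x then ENNReal.ofReal (q * t ^ (q-1)) else 0)) := swap1
  _ ≤ ∫⁻ t in Ioi (0:ℝ), (3:ℝ≥0∞)^d * ∫⁻ x, (if ENNReal.ofReal (t/2) < h x
        then ENNReal.ofReal (2*q*t^(q-2)) * h x else 0) := by
        refine setLIntegral_mono_ae ?_ (ae_of_all _ (fun t ht => step_t t ht))
        apply Measurable.aemeasurable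
        apply Measurable.const_mul
        apply Measurable.lintegral_prod_left
        apply Measurable.ite
        · exact measurableSet_lt (by fun_prop) (hmeas.comp measurable_fst)
        · fun_prop
        · fun_prop
  _ = (3:ℝ≥0∞)^d * ∫⁻ t in Ioi (0:ℝ), ∫⁻ x, (if ENNReal.ofReal (t/2) < h x
        then ENNReal.ofReal (2*q*t^(q-2)) * h x else 0) := by
        rw [lintegral_const_mul' _ _ (by simp : ((3:ℝ≥0∞)^d) ≠ ⊤)]
  _ = (3:ℝ≥0∞)^d * ∫⁻ x, ∫⁻ t in Ioi (0:ℝ), (if ENNReal.ofReal (t/2) < h x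
        then ENNReal.ofReal (2*q*t^(q-2)) * h x else 0) := by
        congr 1
        refine (lintegral_lintegral_swap ?_).symm
        apply Measurable.aemeasurable
        apply Measurable.ite
        · exact measurableSet_lt (by fun_prop) (hmeas.comp measurable_fst)
        · fun_prop
        · fun_prop
  _ ≤ (3:ℝ≥0∞)^d * ∫⁻ x, ENNReal.ofReal (2^q * (q/(q-1))) * h x ^ q :=
        mul_le_mul_right (lintegral_mono step_x) _
  _ = ENNReal.ofReal ((3:ℝ)^d * 2^q * (q/(q-1))) * ∫⁻ x, (h x) ^ q := by
        rw [lintegral_const_mul' _ _ ofReal_ne_top, ← mul_assoc]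
        congr 1
        rw [show ((3:ℝ≥0∞))^d = ENNReal.ofReal ((3:ℝ)^d) by
          rw [ENNReal.ofReal_pow (by norm_num)]
          norm_num]
        rw [← ENNReal.ofReal_mul (by positivity)]
        congr 1
        ring


theorem lavg_holder (Q : Cube d) {F H W : Ed d → ℝ≥0∞} {a b : ℝ}
    (ha : 0 ≤ a) (hb : 0 ≤ b) (hab : a + b = 1)
    (hH : Measurable H) (hW : Measurable W)
    (hpt : ∀ y, F y ≤ H y ^ a * W y ^ b) :
    lavg Q F ≤ (lavg Q H) ^ a * (lavg Q W) ^ b := by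
  have h1 : ∫⁻ x in Q.carrier, F x ≤
      (∫⁻ x in Q.carrier, H x) ^ a * (∫⁻ x in Q.carrier, W x) ^ b :=
    le_trans (lintegral_mono hpt)
      (ENNReal.lintegral_mul_norm_pow_le hH.aemeasurable hW.aemeasurable ha hb hab)
  have hV : (volume Q.carrier)⁻¹ = ((volume Q.carrier)⁻¹) ^ a * ((volume Q.carrier)⁻¹) ^ b := by
    rw [← ENNReal.rpow_add a b (by simp [Q.volume_ne_top]) (by simp [Q.volume_pos.ne']), hab,
      ENNReal.rpow_one]
  rw [lavg, lavg, lavg]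
  calc (volume Q.carrier)⁻¹ * ∫⁻ x in Q.carrier, F x
      ≤ (volume Q.carrier)⁻¹ * ((∫⁻ x in Q.carrier, H x) ^ a * (∫⁻ x in Q.carrier, W x) ^ b) :=
        mul_le_mul_right h1 _
  _ = ((volume Q.carrier)⁻¹ * ∫⁻ x in Q.carrier, H x) ^ a *
      ((volume Q.carrier)⁻¹ * ∫⁻ x in Q.carrier, W x) ^ b := by
        rw [ENNReal.mul_rpow_of_nonneg _ _ ha, ENNReal.mul_rpow_of_nonneg _ _ hb]
        nth_rewrite 1 [hV]
        ring

theorem maximal_holder {F H W : Ed d → ℝ≥0∞} {a b : ℝ}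
    (ha : 0 ≤ a) (hb : 0 ≤ b) (hab : a + b = 1)
    (hH : Measurable H) (hW : Measurable W)
    (hpt : ∀ y, F y ≤ H y ^ a * W y ^ b) (x : Ed d) :
    maximal F x ≤ (maximal H x) ^ a * (maximal W x) ^ b := by
  refine iSup₂_le fun Q hQ => ?_
  refine le_trans (lavg_holder Q ha hb hab hH hW hpt) ?_
  exact mul_le_mul' (ENNReal.rpow_le_rpow (le_maximal hQ) ha)
    (ENNReal.rpow_le_rpow (le_maximal hQ) hb)

theorem rpow_mul_rpow_neg_le_one (X : ℝ≥0∞) {a : ℝ} (ha : 0 < a) :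
    X ^ a * X ^ (-a) ≤ 1 := by
  rcases eq_or_ne X 0 with rfl | h0
  · rw [ENNReal.zero_rpow_of_pos ha]
    simp
  rcases eq_or_ne X ⊤ with rfl | htop
  · rw [ENNReal.top_rpow_of_neg (show -a < 0 by linarith)]
    simp
  · rw [← ENNReal.rpow_add _ _ h0 htop]
    simp


theorem final_const_ineq {t p q : ℝ} (ht : 1 < t) (hp : 1 < p)
    (hq : q = (p/(p-1)) * (1 - 1/(t*p))) :
    ((3:ℝ)^d * 2^q * (q/(q-1))) ^ ((p-1)/p) ≤
      ((2:ℝ) * 3^d + 1) * p * (t/(t-1)) ^ ((p-1)/p) := by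
  have hp1 : (0:ℝ) < p - 1 := by linarith
  have ht1 : (0:ℝ) < t - 1 := by linarith
  have hp0 : (0:ℝ) < p := by linarith
  have ht0 : (0:ℝ) < t := by linarith
  have htp1 : 1 < t * p := by nlinarith
  set r := (p-1)/p with hr
  have hr0 : (0:ℝ) < r := by rw [hr]; positivity
  have hr1 : r ≤ 1 := by rw [hr, div_le_one hp0]; linarith
  have hq1 : 1 < q := by
    rw [hq, show 1 - 1/(t*p) = (t*p-1)/(t*p) by field_simp, div_mul_div_comm,
      lt_div_iff₀ (by positivity)]
    nlinarith
  have hq1' : (0:ℝ) < q - 1 := by linarith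
  have hq0 : (0:ℝ) < q := by linarith
  have hqq : q / (q-1) = (t*p-1)/(t-1) := by
    have e1 : q = (t*p-1)/(t*(p-1)) := by
      rw [hq]; field_simp
    have e2 : q - 1 = (t-1)/(t*(p-1)) := by
      rw [e1]; field_simp; ring
    rw [e2, e1]
    rw [div_div_div_eq]
    rw [div_eq_div_iff (by positivity) (by positivity)]
    ring
  have hqr : q * r = 1 - 1/(t*p) := by
    rw [hq, hr]
    have hPne : p/(p-1) ≠ 0 := by positivity
    field_simp
  have hqr1 : q * r ≤ 1 := by
    rw [hqr]
    have : 0 < 1/(t*p) := by positivity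
    linarith
  have b1 : ((3:ℝ)^d)^r ≤ 3^d := by
    calc ((3:ℝ)^d)^r ≤ ((3:ℝ)^d)^(1:ℝ) :=
          Real.rpow_le_rpow_of_exponent_le (one_le_pow₀ (by norm_num)) hr1
    _ = 3^d := Real.rpow_one _
  have b2 : ((2:ℝ)^q)^r ≤ 2 := by
    rw [← Real.rpow_mul (by norm_num : (0:ℝ) ≤ 2)]
    calc (2:ℝ) ^ (q*r) ≤ (2:ℝ) ^ (1:ℝ) :=
          Real.rpow_le_rpow_of_exponent_le one_le_two hqr1
    _ = 2 := Real.rpow_one _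
  have b3 : (q/(q-1))^r ≤ p * (t/(t-1))^r := by
    have h1 : q/(q-1) ≤ p * (t/(t-1)) := by
      rw [hqq, show p * (t/(t-1)) = t*p/(t-1) by ring]
      gcongr
      linarith
    calc (q/(q-1))^r ≤ (p * (t/(t-1)))^r :=
          Real.rpow_le_rpow (le_of_lt (div_pos hq0 hq1')) h1 hr0.le
    _ = p^r * ((t/(t-1))^r) := Real.mul_rpow hp0.le (by positivity)
    _ ≤ p * ((t/(t-1))^r) := by
          refine mul_le_mul_of_nonneg_right ?_ (by positivity)
          calc p^r ≤ p^(1:ℝ) := Real.rpow_le_rpow_of_exponent_le hp.le hr1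
          _ = p := Real.rpow_one _
  have hT : (0:ℝ) < (t/(t-1))^r := Real.rpow_pos_of_pos (by positivity) r
  calc ((3:ℝ)^d * 2^q * (q/(q-1))) ^ r
      = ((3:ℝ)^d)^r * ((2:ℝ)^q)^r * (q/(q-1))^r := by
        rw [Real.mul_rpow (by positivity) (le_of_lt (div_pos hq0 hq1')),
          Real.mul_rpow (by positivity) (by positivity)]
  _ ≤ (3:ℝ)^d * 2 * (p * (t/(t-1))^r) := by
        apply mul_le_mul (mul_le_mul b1 b2 (by positivity) (by positivity)) b3
          (by positivity) (by positivity)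
  _ ≤ ((2:ℝ) * 3^d + 1) * p * (t/(t-1)) ^ r := by
        nlinarith [pow_pos (show (0:ℝ) < 3 by norm_num) d, hT, hp0, mul_pos hp0 hT]


end Rough

open MeasureTheory ENNReal Rough in
theorem stmt14 (d : ℕ) :
    ∃ c : ℝ, 0 < c ∧
      ∀ t p : ℝ, 1 < t → 1 < p →
        ∀ w : Ed d → ℝ, Measurable w → (∀ x, 0 ≤ w x) →
        ∀ f : Ed d → ℝ, Measurable f →
          (∫⁻ x, Mabs f x ^ (p / (p - 1)) *
              ((maximal (fun y => ENNReal.ofReal (w y ^ t)) x) ^ (1 / t))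
                ^ (1 - p / (p - 1))) ^ ((p - 1) / p) ≤
            ENNReal.ofReal (c * p * (t / (t - 1)) ^ ((p - 1) / p)) *
              (∫⁻ x, ENNReal.ofReal |f x| ^ (p / (p - 1)) *
                ENNReal.ofReal (w x) ^ (1 - p / (p - 1))) ^ ((p - 1) / p) := by
  refine ⟨(2:ℝ) * 3^d + 1, by positivity, ?_⟩
  intro t p ht hp w hw hw0 f hf
  set P := p / (p - 1) with hP
  have hp1 : (0:ℝ) < p - 1 := by linarith
  have ht1 : (0:ℝ) < t - 1 := by linarith
  have hp0 : (0:ℝ) < p := by linarith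
  have ht0 : (0:ℝ) < t := by linarith
  have hP1 : 1 < P := by rw [hP, lt_div_iff₀ hp1]; linarith
  have hP0 : (0:ℝ) < P := by linarith
  have hr0 : (0:ℝ) ≤ (p-1)/p := by positivity
  set Z := {x : Ed d | w x = 0 ∧ f x ≠ 0} with hZdef
  by_cases hZ : volume Z = 0
  swap
  · -- degenerate branch : RHS is infinite
    have hint : (∫⁻ x, ENNReal.ofReal |f x| ^ P * ENNReal.ofReal (w x) ^ (1 - P)) = ⊤ := by
      refine top_unique ?_
      have hbig : ∀ x ∈ Z, (⊤:ℝ≥0∞) ≤ ENNReal.ofReal |f x| ^ P * ENNReal.ofReal (w x) ^ (1 - P) := by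
        intro x hx
        obtain ⟨hwx, hfx⟩ := hx
        rw [hwx]
        simp only [ENNReal.ofReal_zero]
        rw [ENNReal.zero_rpow_of_neg (by linarith)]
        rw [ENNReal.mul_top
          (ENNReal.rpow_pos (ENNReal.ofReal_pos.2 (abs_pos.2 hfx)) ofReal_ne_top).ne']
      calc (⊤:ℝ≥0∞) = ⊤ * volume Z := (ENNReal.top_mul hZ).symm
      _ = ∫⁻ _ in Z, ⊤ := (setLIntegral_const _ _).symm
      _ ≤ ∫⁻ x in Z, ENNReal.ofReal |f x| ^ P * ENNReal.ofReal (w x) ^ (1 - P) :=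
          setLIntegral_mono (by fun_prop) hbig
      _ ≤ _ := setLIntegral_le_lintegral _ _
    rw [hint, ENNReal.top_rpow_of_pos (by positivity : (0:ℝ) < (p-1)/p), ENNReal.mul_top ?_]
    · exact le_top
    · have h4 : (0:ℝ) < (t/(t-1))^((p-1)/p) := Real.rpow_pos_of_pos (by positivity) _
      have h3 : (0:ℝ) < (2:ℝ)*3^d+1 := by positivity
      exact (ENNReal.ofReal_pos.2 (mul_pos (mul_pos h3 hp0) h4)).ne'
  · -- main branch
    set f' := fun x => if w x = 0 then (0:ℝ) else f x with hf'
    have hf'meas : Measurable f' :=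
      Measurable.ite (hw (measurableSet_singleton 0)) measurable_const hf
    set F := fun x => ENNReal.ofReal |f' x| with hF
    set Ow := fun x => ENNReal.ofReal (w x) with hOw
    set W := fun x => Ow x ^ t with hWdef
    have hFmeas : Measurable F := by fun_prop
    have hWmeas : Measurable W := by fun_prop
    have hae : (fun x => ENNReal.ofReal |f x|) =ᵐ[volume] F := by
      rw [Filter.EventuallyEq, ae_iff]
      refine measure_mono_null ?_ hZ
      intro x hx
      simp only [Set.mem_setOf_eq] at hx ⊢
      by_contra hcon
      rw [hZdef] at hcon
      simp only [Set.mem_setOf_eq, not_and, not_not] at hcon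
      apply hx
      by_cases hwx : w x = 0
      · rw [hF, hf']
        simp [hwx, hcon hwx]
      · rw [hF, hf']
        simp [hwx]
    have hMabs : ∀ x, Mabs f x = maximal F x := fun x => congrFun (maximal_congr_ae hae) x
    -- exponents
    have htp1 : 1 < t * p := by nlinarith
    set A := 1 / (t*p) with hA
    set B := 1 - A with hB
    have hA0 : 0 < A := by rw [hA]; positivity
    have hA1 : A < 1 := by rw [hA, div_lt_one (by positivity)]; linarith
    have hB0 : 0 < B := by rw [hB]; linarith
    have hB1 : B < 1 := by rw [hB]; linarith
    set s := 1 / B with hs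
    have hs0 : 0 < s := by positivity
    set q := P * B with hq
    have hq' : q = (p/(p-1)) * (1 - 1/(t*p)) := by rw [hq, hP, hB, hA]
    have hsB : s * B = 1 := by rw [hs]; field_simp
    have hq1 : 1 < q := by
      rw [hq', show 1 - 1/(t*p) = (t*p-1)/(t*p) by field_simp, div_mul_div_comm,
        lt_div_iff₀ (by positivity)]
      nlinarith
    have hq0 : (0:ℝ) < q := by linarith
    -- auxiliary function h
    set h := fun x => F x ^ s * Ow x ^ (-(s/p)) with hh
    have hhmeas : Measurable h := by fun_prop
    -- pointwise Hoelder-type bound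
    have hpt : ∀ y, F y ≤ h y ^ B * W y ^ A := by
      intro y
      by_cases hwy : w y = 0
      · have hfy : f' y = 0 := by rw [hf']; simp [hwy]
        simp only [hF, hfy, abs_zero, ENNReal.ofReal_zero]
        exact zero_le
      · have hwy0 : 0 < w y := lt_of_le_of_ne (hw0 y) (Ne.symm hwy)
        have hOw0 : Ow y ≠ 0 := by
          rw [hOw]; exact (ENNReal.ofReal_pos.2 hwy0).ne'
        have hOwtop : Ow y ≠ ⊤ := by rw [hOw]; exact ofReal_ne_top
        apply le_of_eq
        rw [hh, hWdef]
        rw [ENNReal.mul_rpow_of_nonneg _ _ hB0.le,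
          ← ENNReal.rpow_mul (F y), ← ENNReal.rpow_mul (Ow y), ← ENNReal.rpow_mul (Ow y)]
        have e2a : -(s/p) * B = -(1/p) := by
          rw [hs]; field_simp
        have e2b : t * A = 1/p := by
          rw [hA]; field_simp
        rw [hsB, e2a, e2b, ENNReal.rpow_one, mul_assoc,
          ← ENNReal.rpow_add _ _ hOw0 hOwtop]
        norm_num
    have hmax : ∀ x, maximal F x ≤ (maximal h x) ^ B * (maximal W x) ^ A :=
      maximal_holder hB0.le hA0.le (by rw [hB]; ring) hhmeas hWmeas hpt
    -- key pointwise bound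
    have hkey : ∀ x, maximal F x ^ P * ((maximal W x) ^ (1/t)) ^ (1 - P) ≤ (maximal h x) ^ q := by
      intro x
      set MA := maximal h x
      set MX := maximal W x
      have h1 : maximal F x ^ P ≤ MA ^ q * MX ^ (A*P) := by
        calc maximal F x ^ P ≤ (MA ^ B * MX ^ A) ^ P :=
              ENNReal.rpow_le_rpow (hmax x) hP0.le
        _ = MA ^ q * MX ^ (A*P) := by
            rw [ENNReal.mul_rpow_of_nonneg _ _ hP0.le, ← ENNReal.rpow_mul, ← ENNReal.rpow_mul]
            rw [show B * P = q by rw [hq]; ring]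
      have h2 : (MX ^ (1/t)) ^ (1-P) = MX ^ (-(A*P)) := by
        rw [← ENNReal.rpow_mul]
        congr 1
        rw [hA, hP]
        field_simp
        ring
      calc maximal F x ^ P * (MX ^ (1/t)) ^ (1-P)
          ≤ (MA ^ q * MX ^ (A*P)) * MX ^ (-(A*P)) := by
            rw [h2]; exact mul_le_mul_left h1 _
      _ = MA ^ q * (MX ^ (A*P) * MX ^ (-(A*P))) := by ring
      _ ≤ MA ^ q * 1 :=
          mul_le_mul_right (rpow_mul_rpow_neg_le_one MX (by positivity)) _
      _ = MA ^ q := mul_one _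
    -- bound for h ^ q
    have hPp : P / p = P - 1 := by rw [hP]; field_simp; ring
    have hhq : ∀ x, h x ^ q ≤ ENNReal.ofReal |f x| ^ P * ENNReal.ofReal (w x) ^ (1 - P) := by
      intro x
      rw [hh]
      rw [ENNReal.mul_rpow_of_nonneg _ _ hq0.le, ← ENNReal.rpow_mul, ← ENNReal.rpow_mul]
      have e1 : s * q = P := by
        rw [hq, hs]; field_simp
      have e2 : -(s/p) * q = 1 - P := by
        rw [hq, hs]
        have : (1/B) / p * (P * B) = P / p := by field_simp
        rw [neg_mul, this, hPp]
        ring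
      rw [e1, e2]
      refine mul_le_mul_left (ENNReal.rpow_le_rpow ?_ hP0.le) _
      apply ENNReal.ofReal_le_ofReal
      rw [hf']
      by_cases hwy : w x = 0 <;> simp [hwy, abs_nonneg]
    -- main integral chain
    have hWW : (fun y => ENNReal.ofReal (w y ^ t)) = W := by
      funext y
      rw [hWdef, hOw]
      exact (ENNReal.ofReal_rpow_of_nonneg (hw0 y) (by linarith)).symm
    have main : (∫⁻ x, Mabs f x ^ P *
          ((maximal (fun y => ENNReal.ofReal (w y ^ t)) x) ^ (1/t)) ^ (1-P))
        ≤ ENNReal.ofReal ((3:ℝ)^d * 2^q * (q/(q-1))) *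
          ∫⁻ x, ENNReal.ofReal |f x| ^ P * ENNReal.ofReal (w x) ^ (1-P) := by
      rw [hWW]
      calc ∫⁻ x, Mabs f x ^ P * ((maximal W x) ^ (1/t)) ^ (1-P)
          ≤ ∫⁻ x, (maximal h x) ^ q := by
            refine lintegral_mono fun x => ?_
            rw [hMabs x]
            exact hkey x
      _ ≤ ENNReal.ofReal ((3:ℝ)^d * 2^q * (q/(q-1))) * ∫⁻ x, h x ^ q :=
            lintegral_maximal_rpow h hhmeas hq1
      _ ≤ _ := mul_le_mul_right (lintegral_mono hhq) _
    refine le_trans (ENNReal.rpow_le_rpow main hr0) ?_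
    rw [ENNReal.mul_rpow_of_nonneg _ _ hr0]
    refine mul_le_mul_left ?_ _
    have hK0 : (0:ℝ) ≤ (3:ℝ)^d * 2^q * (q/(q-1)) := by
      have := div_pos hq0 (by linarith : (0:ℝ) < q - 1)
      positivity
    rw [ENNReal.ofReal_rpow_of_nonneg hK0 hr0]
    exact ENNReal.ofReal_le_ofReal (final_const_ineq ht hp hq')
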